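/- Let Λ_n denote the Wajsberg chain Γ(ℤ, n) with n+1 elements and let S be the Wajsberg chain Γ(X, n) where X is the dense subgroup of ℝ generated by 1 and a fixed irrational α. Then Λ_k embeds into S if and only if k divides n. -/

import Mathlib

/-- Let `Λ_k = Γ(ℤ, k)` be the Wajsberg chain with `k+1` elements `{0,…,k}` with
`x·y = max(x+y-k, 0)` and `x → y = min(k-x+y, k)`, and let `S = Γ(X, n)` where `X`
is the dense subgroup of `ℝ` generated by `1` and a fixed irrational `α`, i.e. the
interval `{x ∈ X : 0 ≤ x ≤ n}` with `x·y = max(x+y-n, 0)` and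
`x → y = min(n-x+y, n)`. Then `Λ_k` embeds into `S` (via an injective map preserving
`0` and the MV-operations) if and only if `k` divides `n`. -/
theorem wajsberg_chain_embeds_iff_dvd (α : ℝ) (hα : Irrational α)
    (k n : ℕ) (hk : 0 < k) (hn : 0 < n) :
    (∃ f : ℤ → ℝ,
      (∀ i : ℤ, 0 ≤ i → i ≤ (k : ℤ) →
        (∃ a b : ℤ, f i = (a : ℝ) + (b : ℝ) * α) ∧ 0 ≤ f i ∧ f i ≤ (n : ℝ)) ∧
      (∀ i j : ℤ, 0 ≤ i → i ≤ (k : ℤ) → 0 ≤ j → j ≤ (k : ℤ) → f i = f j → i = j) ∧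
      f 0 = 0 ∧
      (∀ i j : ℤ, 0 ≤ i → i ≤ (k : ℤ) → 0 ≤ j → j ≤ (k : ℤ) →
        f (max (i + j - (k : ℤ)) 0) = max (f i + f j - (n : ℝ)) 0) ∧
      (∀ i j : ℤ, 0 ≤ i → i ≤ (k : ℤ) → 0 ≤ j → j ≤ (k : ℤ) →
        f (min ((k : ℤ) - i + j) (k : ℤ)) = min ((n : ℝ) - f i + f j) (n : ℝ))) ↔
    k ∣ n := by
  constructor
  · rintro ⟨f, hmem, hinj, h0, _hmul, himp⟩
    have hk1 : (1 : ℤ) ≤ (k : ℤ) := by exact_mod_cast hk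
    -- f k = n
    have hfk : f (k : ℤ) = (n : ℝ) := by
      have h := himp 0 0 le_rfl (by exact_mod_cast hk.le) le_rfl (by exact_mod_cast hk.le)
      simp only [h0, sub_zero, add_zero, min_self] at h
      simpa using h
    set c : ℝ := (n : ℝ) - f ((k : ℤ) - 1) with hc
    -- step lemma
    have step : ∀ i : ℤ, 1 ≤ i → i ≤ (k : ℤ) → f i = f (i - 1) + c := by
      intro i h1 h2
      have h := himp i (i - 1) (by omega) h2 (by omega) (by omega)
      have hmin : min ((k : ℤ) - i + (i - 1)) (k : ℤ) = (k : ℤ) - 1 := by omega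
      rw [hmin] at h
      rcases le_or_gt ((n : ℝ) - f i + f (i - 1)) (n : ℝ) with hle | hlt
      · rw [min_eq_left hle] at h
        rw [hc]; linarith
      · rw [min_eq_right hlt.le] at h
        have : (k : ℤ) - 1 = (k : ℤ) := by
          apply hinj ((k:ℤ) - 1) (k : ℤ) (by omega) (by omega) (by omega) le_rfl
          rw [h, hfk]
        omega
    -- f j = j * c for 0 ≤ j ≤ k
    have key : ∀ j : ℕ, (j : ℤ) ≤ (k : ℤ) → f (j : ℤ) = (j : ℝ) * c := by
      intro j
      induction j with
      | zero => intro _; simpa using h0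
      | succ m ih =>
        intro hle
        have hstep := step ((m : ℤ) + 1) (by omega) (by push_cast at hle ⊢; omega)
        have h1 : ((m : ℤ) + 1 - 1) = (m : ℤ) := by ring
        rw [h1] at hstep
        have := ih (by push_cast at hle ⊢; omega)
        push_cast
        rw [hstep, this]; ring
    have hkc : (k : ℝ) * c = (n : ℝ) := by
      have := key k le_rfl
      rw [hfk] at this
      linarith
    have hf1 : f 1 = c := by
      have := key 1 hk1
      simpa using this
    obtain ⟨⟨a, b, hab⟩, -, -⟩ := hmem 1 (by norm_num) hk1
    have hb : b = 0 := by
      by_contra hb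
      have hd : (k : ℤ) * b ≠ 0 := by
        intro h; rcases mul_eq_zero.mp h with h | h
        · exact absurd h (by exact_mod_cast hk.ne')
        · exact hb h
      have hirr := hα.intCast_mul hd
      have heq : (((k : ℤ) * b : ℤ) : ℝ) * α = (((n : ℤ) - (k : ℤ) * a : ℤ) : ℝ) := by
        push_cast
        have : f 1 = (a : ℝ) + (b : ℝ) * α := hab
        rw [hf1] at this
        nlinarith [hkc]
      rw [heq] at hirr
      exact (Int.not_irrational _) hirr
    have hca : c = (a : ℝ) := by rw [← hf1, hab, hb]; simp
    have hdvd : (k : ℤ) ∣ (n : ℤ) := ⟨a, by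
      have : (k : ℝ) * (a : ℝ) = (n : ℝ) := by rw [← hca]; exact hkc
      exact_mod_cast this.symm⟩
    exact_mod_cast hdvd
  · rintro ⟨m, hm⟩
    have hm0 : 0 < m := by
      rcases Nat.eq_zero_or_pos m with h | h
      · subst h; omega
      · exact h
    refine ⟨fun i => (m : ℝ) * (i : ℝ), ?_, ?_, by simp, ?_, ?_⟩
    · intro i h0i hik
      refine ⟨⟨(m : ℤ) * i, 0, by push_cast; ring⟩, ?_, ?_⟩
      · positivity
      · calc (m : ℝ) * (i : ℝ) ≤ (m : ℝ) * (k : ℝ) := by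
              apply mul_le_mul_of_nonneg_left (by exact_mod_cast hik) (by positivity)
          _ = (n : ℝ) := by rw [hm]; push_cast; ring
    · intro i j _ _ _ _ h
      have : (i : ℝ) = (j : ℝ) :=
        mul_left_cancel₀ (show (m : ℝ) ≠ 0 by positivity) h
      exact_mod_cast this
    · intro i j _ _ _ _
      dsimp only
      have hn' : (n : ℝ) = (m : ℝ) * (k : ℝ) := by rw [hm]; push_cast; ring
      rw [show ((max (i + j - (k:ℤ)) 0 : ℤ) : ℝ) = max ((i + j - (k:ℤ) : ℤ) : ℝ) ((0:ℤ):ℝ) from by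
        exact_mod_cast Int.cast_max]
      rw [mul_max_of_nonneg _ _ (by positivity : (0:ℝ) ≤ (m:ℝ))]
      push_cast
      rw [hn']
      ring_nf
    · intro i j _ _ _ _
      dsimp only
      have hn' : (n : ℝ) = (m : ℝ) * (k : ℝ) := by rw [hm]; push_cast; ring
      rw [show ((min ((k:ℤ) - i + j) (k:ℤ) : ℤ) : ℝ) = min (((k:ℤ) - i + j : ℤ) : ℝ) (((k:ℤ)):ℝ) from by
        exact_mod_cast Int.cast_min]
      rw [mul_min_of_nonneg _ _ (by positivity : (0:ℝ) ≤ (m:ℝ))]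
      push_cast
      rw [hn']
      ring_nf
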